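/- arXiv:1606.05077 — 2 statements merged into one kernel-verified Lean document; each statement's English description precedes it below -/
import Mathlib

section
/- The inverse of the almost-Riordan array (1,g,f) is (1, 1/(g∘f̄), f̄), where f̄ is the compositional inverse of f; i.e. (1,g,f)·(1, 1/(g∘f̄), f̄) = (1,1,x) = (1, 1/(g∘f̄), f̄)·(1,g,f). -/
open PowerSeries Finset

/-- Shift: `shift h = (h - h₀)/x`, i.e. the series with coefficients `h₁, h₂, …`. -/
noncomputable def shift (h : PowerSeries ℤ) : PowerSeries ℤ :=
  PowerSeries.mk fun n => coeff (n + 1) h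

/-- Composition `h ∘ f` of formal power series (intended for `f` with zero constant term,
in which case `coeff n (f ^ k) = 0` for `k > n`). -/
noncomputable def comp (h f : PowerSeries ℤ) : PowerSeries ℤ :=
  PowerSeries.mk fun n => ∑ k ∈ Finset.range (n + 1), coeff k h * coeff n (f ^ k)

/-- Action of an almost-Riordan array `(a,g,f)` on a power series `b`:
`(a,g,f)·b = b₀ a + x g b̃(f)` where `b̃ = (b - b₀)/x`. -/
noncomputable def act (a g f b : PowerSeries ℤ) : PowerSeries ℤ :=
  C (coeff 0 b) * a + X * g * comp (shift b) f

/-- Product of almost-Riordan arrays: `(a,g,f)·(b,u,v) = ((a,g,f)·b, g·u(f), v(f))`. -/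
noncomputable def arMul (t s : PowerSeries ℤ × PowerSeries ℤ × PowerSeries ℤ) :
    PowerSeries ℤ × PowerSeries ℤ × PowerSeries ℤ :=
  (act t.1 t.2.1 t.2.2 s.1, t.2.1 * comp s.2.1 t.2.2, comp s.2.2 t.2.2)

/-- `(a,g,f)` is an almost-Riordan array: `a₀ = 1`, `g₀ = 1`, `f₀ = 0`, `f₁ = 1`. -/
def isAR (t : PowerSeries ℤ × PowerSeries ℤ × PowerSeries ℤ) : Prop :=
  coeff 0 t.1 = 1 ∧ coeff 0 t.2.1 = 1 ∧ coeff 0 t.2.2 = 0 ∧ coeff 1 t.2.2 = 1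

lemma coeff_pow_zero {f : PowerSeries ℤ} (hf : coeff 0 f = 0) {n k : ℕ} (h : n < k) :
    coeff n (f ^ k) = 0 := by
  have hX : (X : PowerSeries ℤ) ∣ f := by
    rw [PowerSeries.X_dvd_iff, ← coeff_zero_eq_constantCoeff_apply]; exact hf
  have : (X : PowerSeries ℤ) ^ k ∣ f ^ k := pow_dvd_pow_of_dvd hX k
  exact (PowerSeries.X_pow_dvd_iff.mp this) n h

lemma coeff_eval₂ {f : PowerSeries ℤ} (hf : coeff 0 f = 0) (p : Polynomial ℤ) (n : ℕ) :
    coeff n (p.eval₂ (C (R := ℤ)) f) =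
      ∑ k ∈ Finset.range (n + 1), p.coeff k * coeff n (f ^ k) := by
  set N := max (p.natDegree + 1) (n + 1) with hN
  have hdeg : p.natDegree < N := lt_of_lt_of_le (Nat.lt_succ_self _) (le_max_left _ _)
  rw [Polynomial.eval₂_eq_sum_range' (C (R := ℤ)) hdeg f, map_sum]
  have hsub : Finset.range (n + 1) ⊆ Finset.range N :=
    Finset.range_subset_range.mpr (le_max_right _ _)
  rw [← Finset.sum_subset hsub]
  · apply Finset.sum_congr rfl
    intro k _
    rw [coeff_C_mul]
  · intro k _ hk
    rw [Finset.mem_range, Nat.lt_succ_iff, not_le] at hk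
    rw [coeff_C_mul, coeff_pow_zero hf hk, mul_zero]

lemma coeff_comp_trunc {f : PowerSeries ℤ} (hf : coeff 0 f = 0) (h : PowerSeries ℤ)
    {n m : ℕ} (hnm : n < m) :
    coeff n (comp h f) = coeff n ((PowerSeries.trunc m h).eval₂ (C (R := ℤ)) f) := by
  rw [coeff_eval₂ hf, comp, coeff_mk]
  apply Finset.sum_congr rfl
  intro k hk
  rw [Finset.mem_range, Nat.lt_succ_iff] at hk
  rw [PowerSeries.coeff_trunc, if_pos (lt_of_le_of_lt hk hnm)]

lemma comp_one (f : PowerSeries ℤ) : comp 1 f = 1 := by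
  ext n
  simp [comp, PowerSeries.coeff_one]

lemma comp_zero (f : PowerSeries ℤ) : comp 0 f = 0 := by
  ext n; simp [comp]

lemma comp_C (f : PowerSeries ℤ) (c : ℤ) : comp (C c) f = C c := by
  ext n
  simp only [comp, coeff_mk, PowerSeries.coeff_C]
  rw [Finset.sum_eq_single 0]
  · simp
  · intro k _ hk; simp [hk]
  · intro h; simp at h

lemma comp_add (a b f : PowerSeries ℤ) : comp (a + b) f = comp a f + comp b f := by
  ext n
  simp [comp, add_mul, Finset.sum_add_distrib]

lemma coeff_trunc_mul (a b : PowerSeries ℤ) {k m : ℕ} (hk : k < m) :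
    (PowerSeries.trunc m a * PowerSeries.trunc m b).coeff k = coeff k (a * b) := by
  rw [Polynomial.coeff_mul, PowerSeries.coeff_mul]
  apply Finset.sum_congr rfl
  rintro ⟨i, j⟩ hij
  replace hij : i + j = k := by simpa using hij
  have hi : i < m := lt_of_le_of_lt (hij ▸ Nat.le_add_right i j) hk
  have hj : j < m := lt_of_le_of_lt (hij ▸ Nat.le_add_left j i) hk
  rw [PowerSeries.coeff_trunc, if_pos hi, PowerSeries.coeff_trunc, if_pos hj]

lemma comp_mul {f : PowerSeries ℤ} (hf : coeff 0 f = 0) (a b : PowerSeries ℤ) :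
    comp (a * b) f = comp a f * comp b f := by
  ext n
  rw [PowerSeries.coeff_mul]
  have h1 : ∀ p ∈ antidiagonal n, ∀ (h : PowerSeries ℤ),
      coeff p.1 (comp h f) = coeff p.1 ((PowerSeries.trunc (n+1) h).eval₂ (C (R := ℤ)) f) := by
    intro p hp h
    replace hp : p.1 + p.2 = n := by simpa using hp
    exact coeff_comp_trunc hf h (Nat.lt_succ_of_le (hp ▸ Nat.le_add_right _ _))
  calc coeff n (comp (a * b) f)
      = coeff n ((PowerSeries.trunc (n+1) a * PowerSeries.trunc (n+1) b).eval₂ (C (R := ℤ)) f) := by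
        rw [coeff_eval₂ hf, comp, coeff_mk]
        apply Finset.sum_congr rfl
        intro k hk
        rw [Finset.mem_range, Nat.lt_succ_iff] at hk
        rw [coeff_trunc_mul a b (Nat.lt_succ_of_le hk)]
    _ = ∑ p ∈ antidiagonal n,
          coeff p.1 ((PowerSeries.trunc (n+1) a).eval₂ (C (R := ℤ)) f) *
          coeff p.2 ((PowerSeries.trunc (n+1) b).eval₂ (C (R := ℤ)) f) := by
        rw [Polynomial.eval₂_mul, PowerSeries.coeff_mul]
    _ = ∑ p ∈ antidiagonal n, coeff p.1 (comp a f) * coeff p.2 (comp b f) := by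
        apply Finset.sum_congr rfl
        intro p hp
        replace hp : p.1 + p.2 = n := by simpa using hp
        rw [← coeff_comp_trunc hf a (Nat.lt_succ_of_le (hp ▸ Nat.le_add_right _ _)),
          ← coeff_comp_trunc hf b (Nat.lt_succ_of_le (hp ▸ Nat.le_add_left _ _))]

noncomputable def compHom (f : PowerSeries ℤ) (hf : coeff 0 f = 0) :
    PowerSeries ℤ →+* PowerSeries ℤ where
  toFun h := comp h f
  map_one' := comp_one f
  map_mul' a b := comp_mul hf a b
  map_zero' := comp_zero f
  map_add' a b := comp_add a b f

lemma coeff_X_zero' : coeff 0 (X : PowerSeries ℤ) = 0 := by simp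

lemma comp_assoc_X {f fi g : PowerSeries ℤ} (hf : coeff 0 f = 0)
    (hfi : coeff 0 fi = 0) (hfif : comp fi f = X) :
    comp (comp g fi) f = g := by
  ext n
  set Q := PowerSeries.trunc (n + 1) g with hQ
  have coeff_comp : ∀ (h f' : PowerSeries ℤ) (m : ℕ), coeff m (comp h f') =
      ∑ k ∈ Finset.range (m + 1), coeff k h * coeff m (f' ^ k) := fun h f' m =>
    coeff_mk m _
  have step1 : coeff n (comp (comp g fi) f) = coeff n (comp (Q.eval₂ (C (R := ℤ)) fi) f) := by
    rw [coeff_comp, coeff_comp]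
    apply Finset.sum_congr rfl
    intro k hk
    rw [Finset.mem_range, Nat.lt_succ_iff] at hk
    congr 1
    rw [coeff_comp, coeff_eval₂ hfi]
    apply Finset.sum_congr rfl
    intro j hj
    rw [Finset.mem_range, Nat.lt_succ_iff] at hj
    rw [hQ, PowerSeries.coeff_trunc, if_pos (Nat.lt_succ_of_le (le_trans hj hk))]
  rw [step1]
  have : comp (Q.eval₂ (C (R := ℤ)) fi) f = (compHom f hf) (Q.eval₂ (C (R := ℤ)) fi) := rfl
  rw [this, Polynomial.hom_eval₂]
  have hC : (compHom f hf).comp (C (R := ℤ)) = C := by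
    ext c
    exact congrArg (coeff _) (comp_C f c)
  have hfi' : (compHom f hf) fi = X := hfif
  rw [hC, hfi', coeff_eval₂ coeff_X_zero']
  rw [Finset.sum_eq_single n]
  · simp [hQ, PowerSeries.coeff_trunc]
  · intro k hk hkn
    rw [PowerSeries.coeff_X_pow, if_neg (fun h => hkn h.symm), mul_zero]
  · intro h; simp at h

lemma shift_one : shift (1 : PowerSeries ℤ) = 0 := by
  ext n; simp [shift, PowerSeries.coeff_one]

lemma act_one (g f : PowerSeries ℤ) : act 1 g f 1 = 1 := by
  rw [act, shift_one, comp_zero, mul_zero, add_zero]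
  simp


/-- `(1,g,f)⁻¹ = (1, 1/(g∘f̄), f̄)`. Here `fi = f̄` is the compositional
inverse of `f` and `gi = 1/(g ∘ f̄)`. -/
theorem statement5 (g f fi gi : PowerSeries ℤ)
    (hg : coeff 0 g = 1) (hf0 : coeff 0 f = 0) (hf1 : coeff 1 f = 1)
    (hfi0 : coeff 0 fi = 0)
    (hffi : comp f fi = X) (hfif : comp fi f = X)
    (hgi : comp g fi * gi = 1) :
    arMul (1, g, f) (1, gi, fi) = (1, 1, X) ∧
    arMul (1, gi, fi) (1, g, f) = (1, 1, X) := by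
  have key : g * comp gi f = 1 := by
    have h1 : comp (comp g fi * gi) f = comp 1 f := by rw [hgi]
    rw [comp_mul hf0, comp_one, comp_assoc_X hf0 hfi0 hfif] at h1
    exact h1
  constructor
  · simp only [arMul, Prod.mk.injEq]
    exact ⟨act_one g f, key, hfif⟩
  · simp only [arMul, Prod.mk.injEq]
    refine ⟨act_one gi fi, ?_, hffi⟩
    rw [mul_comm]; exact hgi
end

section
/- The subgroup of almost-Riordan arrays of the form (g, g f/x, f) (the embedded copy of the Riordan group) is not a normal subgroup of the group of almost-Riordan arrays. -/
open PowerSeries Finset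

lemma comp_X (h : PowerSeries ℤ) : comp h X = h := by
  ext n
  simp only [comp, coeff_mk, coeff_X_pow]
  rw [Finset.sum_eq_single n]
  · simp
  · intro k _ hk; simp [Ne.symm hk]
  · intro h; exact absurd (Finset.self_mem_range_succ n) h

lemma shift_X : shift X = 1 := by
  ext n
  simp only [shift, coeff_mk, coeff_X, coeff_one]
  cases n <;> simp

lemma shift_one_add_X : shift (1 + X) = 1 := by
  ext n
  simp only [shift, coeff_mk, map_add, coeff_X, coeff_one]
  cases n <;> simp

lemma shift_one_sub_X : shift (1 - X) = -1 := by
  ext n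
  simp only [shift, coeff_mk, map_sub, coeff_X, coeff_one, map_neg]
  cases n <;> simp

/-- the embedded copy `{(g, gf/x, f)}` of the Riordan group is not a
normal subgroup of the group of almost-Riordan arrays: some conjugate of an element
of that subgroup is not of the form `(U, UV/x, V)`. Here `fi = f̄`, `gi = 1/(g∘f̄)`,
so `(a,g,f)⁻¹ = ((1,−gi,fi)·a, gi, fi)`. -/
theorem statement17 :
    ∃ a g f u v fi gi : PowerSeries ℤ,
      isAR (a, g, f) ∧
      coeff 0 u = 1 ∧ coeff 0 v = 0 ∧ coeff 1 v = 1 ∧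
      coeff 0 fi = 0 ∧ comp f fi = X ∧ comp fi f = X ∧
      comp g fi * gi = 1 ∧
      ¬ ∃ U V : PowerSeries ℤ,
        arMul (arMul (a, g, f) (u, u * shift v, v)) (act 1 (-gi) fi a, gi, fi) =
          (U, U * shift V, V) := by
  refine ⟨1 + X, 1, X, 1 + X, X, X, 1, ?_, ?_, ?_, ?_, ?_, ?_, ?_, ?_, ?_⟩
  · refine ⟨by simp, by simp, by simp, by simp⟩
  · simp
  · simp
  · simp
  · simp
  · exact comp_X X
  · exact comp_X X
  · rw [comp_X]; ring
  · have hinv : act 1 (-1) X (1 + X) = 1 - X := by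
      simp only [act, shift_one_add_X, comp_X]
      have : coeff 0 ((1:PowerSeries ℤ) + X) = 1 := by simp
      rw [this]
      simp only [map_one]
      ring
    have h1 : arMul ((1:PowerSeries ℤ) + X, 1, X) (1 + X, (1 + X) * shift X, X)
        = (1 + 2 * X, 1 + X, X) := by
      simp only [arMul, shift_X, mul_one, comp_X, act, shift_one_add_X]
      have : coeff 0 ((1:PowerSeries ℤ) + X) = 1 := by simp
      rw [this]
      simp only [map_one]
      simp only [Prod.mk.injEq]
      exact ⟨by ring, by ring, trivial⟩
    have h2 : arMul ((1:PowerSeries ℤ) + 2 * X, 1 + X, X) (1 - X, 1, X)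
        = (1 + X - X ^ 2, 1 + X, X) := by
      simp only [arMul, comp_X, act, shift_one_sub_X]
      have : coeff 0 ((1:PowerSeries ℤ) - X) = 1 := by simp
      rw [this]
      simp only [map_one]
      simp only [Prod.mk.injEq]
      exact ⟨by ring, by ring, trivial⟩
    rw [hinv, h1, h2]
    rintro ⟨U, V, hUV⟩
    have hV : V = X := (Prod.mk.injEq _ _ _ _).mp ((Prod.mk.injEq _ _ _ _).mp hUV).2 |>.2.symm
    have hU : (1:PowerSeries ℤ) + X = U := by
      have := ((Prod.mk.injEq _ _ _ _).mp ((Prod.mk.injEq _ _ _ _).mp hUV).2).1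
      rw [hV, shift_X, mul_one] at this
      exact this
    have hfst : (1:PowerSeries ℤ) + X - X ^ 2 = U := ((Prod.mk.injEq _ _ _ _).mp hUV).1
    rw [← hU] at hfst
    have := congrArg (coeff 2) hfst
    simp [coeff_X_pow] at this
end
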